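/- Fix g ≥ 1 and ℓ with m := 3(g−1) + 2ℓ ≥ 0. For every core graph ξ of type (g, n, r) with n − r ≤ ℓ, one has n + ρ(A_ξ) ≤ ⌈9(g−1)/2⌉ + 3(n−r) ≤ ⌈3m/2⌉, where ρ(A_ξ) is the maximal number of rows of a Young diagram appearing in the irreducible decomposition of the S_n-module A_ξ = Ind_{I_γ}^{S_n}(det(γ)_{Aut(γ)}). -/
import Mathlib


/-- A finite graph with a marking, following Payne–Willwacher: a finite nonempty set
of vertices `V`, a finite set of flags (half-edges) `F`, an adjacency map `a`, an
involution `ι` (whose 2-element orbits are edges and whose fixed points are legs),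
together with a distinguished vertex `dv` and a set `marked ⊆ a⁻¹(dv)` of marked
flags. -/
structure MGraph where
  V : Type
  F : Type
  [fintypeV : Fintype V]
  [fintypeF : Fintype F]
  [decV : DecidableEq V]
  [decF : DecidableEq F]
  nonemptyV : Nonempty V
  a : F → V
  ι : F → F
  ι_invol : ∀ f, ι (ι f) = f
  dv : V
  marked : Finset F
  marked_adj : ∀ f ∈ marked, a f = dv

namespace MGraph

attribute [instance] fintypeV fintypeF decV decF

variable (G : MGraph)

/-- The number of legs (fixed flags). -/
noncomputable def numLegs : ℕ := Fintype.card {f : G.F // G.ι f = f}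

/-- The number of edges (2-element orbits of the involution). -/
noncomputable def numEdges : ℕ := Fintype.card {f : G.F // G.ι f ≠ f} / 2

/-- Two vertices are adjacent if some edge joins them. -/
def Adj (v w : G.V) : Prop := ∃ f, G.ι f ≠ f ∧ G.a f = v ∧ G.a (G.ι f) = w

/-- The graph is connected. -/
def Connected : Prop := ∀ v w : G.V, Relation.ReflTransGen G.Adj v w

/-- Admissibility of the marking: stability (neutral vertices have valence ≥ 3),
no neutral tadpoles, and no doubly-marked edges. -/
def Admissible : Prop :=
  (∀ w : G.V, w ≠ G.dv → 3 ≤ Fintype.card {f : G.F // G.a f = w}) ∧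
  (∀ f : G.F, G.ι f ≠ f → G.a f = G.a (G.ι f) → G.a f = G.dv) ∧
  (∀ f ∈ G.marked, G.ι f ∈ G.marked → G.ι f = f)

/-- A core graph has no marked legs. -/
def NoMarkedLegs : Prop := ∀ f ∈ G.marked, G.ι f ≠ f

/-- The graph is of type `(g, n, r)`: first Betti number `g − 1`
(i.e. `|E| − |V| + 1 = g − 1`, written additively), `n` legs and `r` marked flags. -/
def IsType (g n r : ℕ) : Prop :=
  G.numEdges + 2 = Fintype.card G.V + g ∧ G.numLegs = n ∧ G.marked.card = r

end MGraph

namespace MGraph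

variable (G : MGraph)

section Iso

variable {n : ℕ}

/-- A (label-preserving) isomorphism between two leg labelings of a marked graph,
given by compatible permutations of the vertices and the flags. -/
structure IsIso (lab lab' : Fin n ≃ {f : G.F // G.ι f = f})
    (eV : Equiv.Perm G.V) (eF : Equiv.Perm G.F) : Prop where
  comm_a : ∀ f, G.a (eF f) = eV (G.a f)
  comm_ι : ∀ f, G.ι (eF f) = eF (G.ι f)
  fix_dv : eV G.dv = G.dv
  mem_marked : ∀ f, f ∈ G.marked ↔ eF f ∈ G.marked
  lab_eq : ∀ i : Fin n, eF (lab i : G.F) = (lab' i : G.F)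

/-- The marked graph `σγ`: the leg labeled `i` in `γ` is labeled `σ i` in `σγ`. -/
def relabel (σ : Equiv.Perm (Fin n)) (lab : Fin n ≃ {f : G.F // G.ι f = f}) :
    Fin n ≃ {f : G.F // G.ι f = f} :=
  σ.symm.trans lab

/-- The set `I_γ ⊆ Sₙ` of permutations `σ` with `σγ ≅ γ` by a label-preserving
isomorphism. -/
def ISet (lab : Fin n ≃ {f : G.F // G.ι f = f}) : Set (Equiv.Perm (Fin n)) :=
  {σ | ∃ eV eF, G.IsIso (G.relabel σ lab) lab eV eF}

end Iso

section Det

/-- The non-leg flags. -/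
abbrev NonLegs : Type := {f : G.F // G.ι f ≠ f}

/-- The relation identifying the two flags of an edge. -/
def edgeRel (f g : G.NonLegs) : Prop := (g : G.F) = f ∨ (g : G.F) = G.ι f

instance : DecidableRel G.edgeRel := by
  unfold edgeRel; infer_instance

/-- The setoid on non-leg flags whose classes are the edges. -/
def edgeSetoid : Setoid G.NonLegs where
  r := G.edgeRel
  iseqv := by
    constructor
    · intro f; exact Or.inl rfl
    · intro f g h
      rcases h with h | h
      · exact Or.inl h.symm
      · refine Or.inr ?_
        rw [h, G.ι_invol]
    · intro f g k hfg hgk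
      rcases hfg with h1 | h1 <;> rcases hgk with h2 | h2
      · exact Or.inl (h2.trans h1)
      · exact Or.inr (by rw [h2, h1])
      · exact Or.inr (h2.trans h1)
      · exact Or.inl (by rw [h2, h1, G.ι_invol])

/-- The set of edges of the graph. -/
abbrev Edge : Type := Quotient G.edgeSetoid

noncomputable instance : DecidableEq G.Edge := Classical.decEq _

noncomputable instance : Fintype G.Edge := Fintype.ofFinite _

variable {G}

/-- A structure-preserving flag permutation induces a permutation of the non-leg
flags. -/
def nonLegEquiv (eF : Equiv.Perm G.F) (hι : ∀ f, G.ι (eF f) = eF (G.ι f)) :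
    G.NonLegs ≃ G.NonLegs :=
  Equiv.subtypeEquiv eF (by
    intro f
    constructor
    · intro h hc
      rw [hι] at hc
      exact h (eF.injective hc)
    · intro h hc
      exact h (by rw [hι, hc]))

/-- The induced permutation of the edges. -/
def edgePerm (eF : Equiv.Perm G.F) (hι : ∀ f, G.ι (eF f) = eF (G.ι f)) :
    Equiv.Perm G.Edge :=
  Quotient.congr (nonLegEquiv eF hι) (by
    intro a b
    unfold edgeSetoid edgeRel
    show _ ↔ ((_ : G.F) = _ ∨ _)
    constructor
    · intro h
      rcases h with h | h
      · exact Or.inl (congrArg eF h)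
      · refine Or.inr ?_
        show eF (b : G.F) = G.ι (eF (a : G.F))
        rw [hι, h]
    · intro h
      rcases h with h | h
      · exact Or.inl (eF.injective h)
      · refine Or.inr ?_
        have : eF (b : G.F) = eF (G.ι (a : G.F)) := by rw [← hι]; exact h
        exact eF.injective this)

/-- The induced permutation of the marked flags. -/
def markedPerm (eF : Equiv.Perm G.F)
    (hm : ∀ f, f ∈ G.marked ↔ eF f ∈ G.marked) :
    Equiv.Perm {f : G.F // f ∈ G.marked} :=
  Equiv.subtypeEquiv eF hm

/-- The character by which a structure-preserving flag permutation acts on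
`det(γ) = det(E) ⊗ det⁻¹(D)`: the product of the signs of the induced permutations
of the edges and of the marked flags. -/
noncomputable def chi (eF : Equiv.Perm G.F)
    (hι : ∀ f, G.ι (eF f) = eF (G.ι f))
    (hm : ∀ f, f ∈ G.marked ↔ eF f ∈ G.marked) : ℤˣ :=
  Equiv.Perm.sign (edgePerm eF hι) * Equiv.Perm.sign (markedPerm eF hm)

variable (G)

/-- The submodule of `det(γ) ≅ ℚ` spanned by the elements `x − φ·x` for
automorphisms `φ` of the labeled marked graph. -/
noncomputable def coinvKer {n : ℕ} (lab : Fin n ≃ {f : G.F // G.ι f = f}) :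
    Submodule ℚ ℚ :=
  Submodule.span ℚ {y : ℚ | ∃ (eV : Equiv.Perm G.V) (eF : Equiv.Perm G.F)
    (h : G.IsIso lab lab eV eF) (x : ℚ),
    y = x - ((chi eF h.comm_ι h.mem_marked : ℤ) : ℚ) * x}

/-- The coinvariant space `det(γ)_{Aut(γ)}` (with `det(γ)` trivialized to `ℚ`). -/
noncomputable abbrev detCoinv {n : ℕ} (lab : Fin n ≃ {f : G.F // G.ι f = f}) : Type :=
  ℚ ⧸ G.coinvKer lab

/-- The projection `det(γ) → det(γ)_{Aut(γ)}`. -/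
noncomputable def detCoinvMk {n : ℕ} (lab : Fin n ≃ {f : G.F // G.ι f = f}) :
    ℚ →ₗ[ℚ] G.detCoinv lab :=
  (G.coinvKer lab).mkQ

/-- The pinning property of the canonical `I_γ`-action on `det(γ)_{Aut(γ)}`:
`σ ∈ I_γ` acts by first identifying `det(γ) = det(σγ)` and then applying (the
determinant character of) any label-preserving isomorphism `σγ → γ`, passed to
`Aut(γ)`-coinvariants. -/
def CanonicalCoinvRep {n : ℕ} (lab : Fin n ≃ {f : G.F // G.ι f = f})
    (H : Subgroup (Equiv.Perm (Fin n)))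
    (θ : Representation ℚ H (G.detCoinv lab)) : Prop :=
  ∀ (σ : Equiv.Perm (Fin n)) (hσ : σ ∈ H)
    (eV : Equiv.Perm G.V) (eF : Equiv.Perm G.F)
    (h : G.IsIso (G.relabel σ lab) lab eV eF) (x : ℚ),
    θ ⟨σ, hσ⟩ (G.detCoinvMk lab x) =
      G.detCoinvMk lab (((chi eF h.comm_ι h.mem_marked : ℤ) : ℚ) * x)

end Det

end MGraph

/-- `ρ(W)` for a representation `W` of `Sₙ`: the maximal `k` such that the
restriction of `W` to `S_k` contains the sign representation; equivalently, the
maximal number of rows of a Young diagram indexing an irreducible summand of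
`W`. -/
noncomputable def rhoRep {n : ℕ} {V : Type} [AddCommGroup V] [Module ℚ V]
    (ρ : Representation ℚ (Equiv.Perm (Fin n)) V) : ℕ :=
  sSup {k | ∃ h : k ≤ n, ∃ v : V, v ≠ 0 ∧ ∀ σ : Equiv.Perm (Fin k),
    ρ (Equiv.Perm.viaEmbeddingHom (Fin.castLEEmb h) σ) v =
      ((Equiv.Perm.sign σ : ℤ) : ℚ) • v}

section Induced

variable {G : Type} [Group G]

/-- The induced representation `Ind_H^G(V)`, modelled as the space of functions
`f : G → V` with `f (h * g) = ρ h (f g)` for `h ∈ H`, with `G` acting by right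
translation.  For finite groups this is the usual induced representation. -/
def indCarrier (H : Subgroup G) {V : Type} [AddCommGroup V] [Module ℚ V]
    (ρ : Representation ℚ H V) : Submodule ℚ (G → V) where
  carrier := {f | ∀ (h : H) (g : G), f ((h : G) * g) = ρ h (f g)}
  add_mem' := by intro x y hx hy h g; simp [hx h g, hy h g]
  zero_mem' := by intro h g; simp
  smul_mem' := by intro c x hx h g; simp [hx h g]

/-- The `G`-action on the induced representation, by right translation. -/
def indRep (H : Subgroup G) {V : Type} [AddCommGroup V] [Module ℚ V]
    (ρ : Representation ℚ H V) : Representation ℚ G (indCarrier H ρ) where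
  toFun σ :=
    { toFun := fun f => ⟨fun g => (f : G → V) (g * σ), by
        intro h g
        have := f.2 h (g * σ)
        simpa [mul_assoc] using this⟩
      map_add' := by intro f₁ f₂; ext g; simp
      map_smul' := by intro c f; ext g; simp }
  map_one' := by ext f g; simp
  map_mul' := by intro σ τ; ext f g; simp [mul_assoc]

/-- Equivariance of a linear map with respect to two representations of `G`. -/
def IsEquivariant {V W : Type} [AddCommGroup V] [Module ℚ V]
    [AddCommGroup W] [Module ℚ W]
    (ρ : Representation ℚ G V) (τ : Representation ℚ G W) (f : V →ₗ[ℚ] W) : Prop :=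
  ∀ (g : G) (v : V), f (ρ g v) = τ g (f v)

end Induced

set_option maxHeartbeats 1000000

open MGraph

/-! ### Auxiliary material for the proof -/

section Helpers

lemma even_card_of_invol {α : Type*} [DecidableEq α] (φ : α → α)
    (hinv : ∀ x, φ (φ x) = x) :
    ∀ s : Finset α, (∀ x ∈ s, φ x ∈ s) → (∀ x ∈ s, φ x ≠ x) → Even s.card := by
  intro s
  induction s using Finset.strongInduction with
  | _ s ih =>
    intro hcl hne
    rcases s.eq_empty_or_nonempty with rfl | ⟨x, hx⟩
    · simp
    · have hφx : φ x ∈ s := hcl x hx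
      have hxx : φ x ≠ x := hne x hx
      set t := (s.erase x).erase (φ x) with ht
      have htsub : t ⊆ s := fun y hy =>
        Finset.mem_of_mem_erase (Finset.mem_of_mem_erase hy)
      have htss : t ⊂ s := by
        refine Finset.ssubset_iff_of_subset htsub |>.mpr ⟨x, hx, ?_⟩
        simp [ht, hxx]
      have hcard : s.card = t.card + 2 := by
        have h1 : (s.erase x).card = s.card - 1 := Finset.card_erase_of_mem hx
        have h2 : t.card = (s.erase x).card - 1 :=
          Finset.card_erase_of_mem (Finset.mem_erase.mpr ⟨hxx, hφx⟩)
        have hpos : 0 < s.card := Finset.card_pos.mpr ⟨x, hx⟩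
        have hpos2 : 0 < (s.erase x).card :=
          Finset.card_pos.mpr ⟨φ x, Finset.mem_erase.mpr ⟨hxx, hφx⟩⟩
        omega
      have hcl' : ∀ y ∈ t, φ y ∈ t := by
        intro y hy
        rcases Finset.mem_erase.mp hy with ⟨hy1, hy2⟩
        rcases Finset.mem_erase.mp hy2 with ⟨hy3, hy4⟩
        refine Finset.mem_erase.mpr ⟨?_, Finset.mem_erase.mpr ⟨?_, hcl y hy4⟩⟩
        · intro hc; apply hy3; rw [← hinv y, hc, hinv]
        · intro hc; exact hy1 (by rw [← hinv y, hc])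
      have := ih t htss hcl' (fun y hy => hne y (htsub hy))
      rw [hcard]
      rcases this with ⟨c, hc⟩
      exact ⟨c + 1, by omega⟩

lemma mem_of_card_two {α : Type*} [DecidableEq α] {s : Finset α} (h : s.card = 2)
    {a b : α} (hab : a ≠ b) (ha : a ∈ s) (hb : b ∈ s) :
    ∀ z ∈ s, z = a ∨ z = b := by
  intro z hz
  by_contra hc
  push_neg at hc
  have hsub : ({z, a, b} : Finset α) ⊆ s := by
    intro y hy
    simp only [Finset.mem_insert, Finset.mem_singleton] at hy
    rcases hy with rfl | rfl | rfl <;> assumption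
  have h3 : ({z, a, b} : Finset α).card = 3 := by
    rw [Finset.card_insert_of_notMem (by simp [hc.1, hc.2]),
      Finset.card_insert_of_notMem (by simp [hab]), Finset.card_singleton]
  have := Finset.card_le_card hsub
  omega

lemma mem_of_card_one {α : Type*} [DecidableEq α] {s : Finset α} (h : s.card = 1)
    {a : α} (ha : a ∈ s) : ∀ z ∈ s, z = a := by
  intro z hz
  rcases Finset.card_eq_one.mp h with ⟨x, rfl⟩
  simp_all

end Helpers

namespace MGraph

variable (G : MGraph)

/-- Legs at a vertex. -/
def lgAt (w : G.V) : Finset G.F :=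
  Finset.univ.filter (fun f => G.ι f = f ∧ G.a f = w)

/-- Non-leg flags at a vertex. -/
def nlAt (w : G.V) : Finset G.F :=
  Finset.univ.filter (fun f => G.ι f ≠ f ∧ G.a f = w)

/-- Non-leg flags at the distinguished vertex whose partner is at `w`. -/
def Ddv (w : G.V) : Finset G.F :=
  (G.nlAt G.dv).filter (fun f => G.a (G.ι f) = w)

/-- Marked flags whose partner is at `w`. -/
def Mk (w : G.V) : Finset G.F :=
  G.marked.filter (fun f => G.a (G.ι f) = w)

lemma ι_injective : Function.Injective G.ι :=
  Function.Involutive.injective G.ι_invol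

lemma sum_lgAt : ∑ w : G.V, (G.lgAt w).card = G.numLegs := by
  rw [numLegs, Fintype.card_subtype]
  rw [Finset.card_eq_sum_card_fiberwise
    (f := G.a) (t := Finset.univ) (fun f _ => Finset.mem_univ _)]
  refine Finset.sum_congr rfl fun w _ => ?_
  rw [lgAt, Finset.filter_filter]

lemma sum_nlAt : ∑ w : G.V, (G.nlAt w).card = 2 * G.numEdges := by
  have heven : Even (Finset.univ.filter (fun f => G.ι f ≠ f)).card := by
    refine even_card_of_invol G.ι G.ι_invol _ ?_ ?_
    · intro x hx
      simp only [Finset.mem_filter, Finset.mem_univ, true_and] at hx ⊢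
      rw [G.ι_invol]; exact fun hc => hx hc.symm
    · intro x hx
      simp only [Finset.mem_filter, Finset.mem_univ, true_and] at hx
      exact fun hc => hx (G.ι_invol x ▸ congrArg G.ι hc).symm
  have hcard : (Finset.univ.filter (fun f => G.ι f ≠ f)).card =
      Fintype.card {f : G.F // G.ι f ≠ f} := (Fintype.card_subtype _).symm
  have h2 : 2 * G.numEdges = Fintype.card {f : G.F // G.ι f ≠ f} := by
    rw [numEdges, Nat.mul_div_cancel']
    rw [← hcard]
    exact heven.two_dvd
  rw [h2, Fintype.card_subtype]
  rw [Finset.card_eq_sum_card_fiberwise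
    (f := G.a) (t := Finset.univ) (fun f _ => Finset.mem_univ _)]
  refine Finset.sum_congr rfl fun w _ => ?_
  rw [nlAt, Finset.filter_filter]

lemma sum_Ddv : ∑ w : G.V, (G.Ddv w).card = (G.nlAt G.dv).card := by
  rw [Finset.card_eq_sum_card_fiberwise
    (f := fun f => G.a (G.ι f)) (t := Finset.univ) (fun f _ => Finset.mem_univ _)]
  rfl

lemma sum_Mk : ∑ w : G.V, (G.Mk w).card = G.marked.card := by
  rw [Finset.card_eq_sum_card_fiberwise
    (f := fun f => G.a (G.ι f)) (t := Finset.univ) (fun f _ => Finset.mem_univ _)]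
  rfl

lemma Mk_subset_Ddv (hcore : G.NoMarkedLegs) (w : G.V) : G.Mk w ⊆ G.Ddv w := by
  intro f hf
  rcases Finset.mem_filter.mp hf with ⟨hf1, hf2⟩
  exact Finset.mem_filter.mpr ⟨Finset.mem_filter.mpr
    ⟨Finset.mem_univ _, hcore f hf1, G.marked_adj f hf1⟩, hf2⟩

lemma two_Mk_dv_le (hadm : G.Admissible) (hcore : G.NoMarkedLegs) :
    2 * (G.Mk G.dv).card ≤ (G.Ddv G.dv).card := by
  classical
  have hdisj : Disjoint (G.Mk G.dv) ((G.Mk G.dv).image G.ι) := by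
    rw [Finset.disjoint_right]
    intro f hf hf2
    rcases Finset.mem_image.mp hf with ⟨m, hm, rfl⟩
    rcases Finset.mem_filter.mp hm with ⟨hm1, _⟩
    rcases Finset.mem_filter.mp hf2 with ⟨hf1, _⟩
    exact hcore m hm1 (hadm.2.2 m hm1 hf1)
  have hsub : G.Mk G.dv ∪ (G.Mk G.dv).image G.ι ⊆ G.Ddv G.dv := by
    intro f hf
    rcases Finset.mem_union.mp hf with hf | hf
    · exact G.Mk_subset_Ddv hcore G.dv hf
    · rcases Finset.mem_image.mp hf with ⟨m, hm, rfl⟩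
      rcases Finset.mem_filter.mp hm with ⟨hm1, hm2⟩
      refine Finset.mem_filter.mpr ⟨Finset.mem_filter.mpr
        ⟨Finset.mem_univ _, ?_, hm2⟩, ?_⟩
      · rw [G.ι_invol]
        exact fun hc => hcore m hm1 hc.symm
      · rw [G.ι_invol]; exact G.marked_adj m hm1
  calc 2 * (G.Mk G.dv).card
      = (G.Mk G.dv).card + ((G.Mk G.dv).image G.ι).card := by
        rw [Finset.card_image_of_injective _ G.ι_injective]; ring
    _ = (G.Mk G.dv ∪ (G.Mk G.dv).image G.ι).card :=
        (Finset.card_union_of_disjoint hdisj).symm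
    _ ≤ _ := Finset.card_le_card hsub

lemma Ddv_card_le (w : G.V) (hw : w ≠ G.dv) : (G.Ddv w).card ≤ (G.nlAt w).card := by
  rw [← Finset.card_image_of_injective (G.Ddv w) G.ι_injective]
  refine Finset.card_le_card ?_
  intro f hf
  rcases Finset.mem_image.mp hf with ⟨m, hm, rfl⟩
  rcases Finset.mem_filter.mp hm with ⟨hm1, hm2⟩
  rcases Finset.mem_filter.mp hm1 with ⟨_, hm3, _⟩
  refine Finset.mem_filter.mpr ⟨Finset.mem_univ _, ?_, hm2⟩
  rw [G.ι_invol]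
  exact fun hc => hm3 hc.symm

lemma valence (hadm : G.Admissible) (w : G.V) (hw : w ≠ G.dv) :
    3 ≤ (G.lgAt w).card + (G.nlAt w).card := by
  have h := hadm.1 w hw
  rw [Fintype.card_subtype] at h
  have hsplit := Finset.card_filter_add_card_filter_not
    (s := Finset.univ.filter (fun f => G.a f = w)) (p := fun f => G.ι f = f)
  rw [Finset.filter_filter, Finset.filter_filter] at hsplit
  have h1 : G.lgAt w = Finset.univ.filter (fun f => G.a f = w ∧ G.ι f = f) := by
    rw [lgAt]; congr 1; ext f; simp [and_comm]
  have h2 : G.nlAt w = Finset.univ.filter (fun f => G.a f = w ∧ ¬ G.ι f = f) := by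
    rw [nlAt]; congr 1; ext f; simp [and_comm]
  rw [h1, h2]
  omega

lemma nlAt_pos (hconn : G.Connected) (w : G.V) (hw : w ≠ G.dv) :
    1 ≤ (G.nlAt w).card := by
  refine Finset.card_pos.mpr ?_
  have h := hconn w G.dv
  rcases Relation.ReflTransGen.cases_head h with heq | ⟨c, hadj, _⟩
  · exact absurd heq hw
  · rcases hadj with ⟨f, hf1, hf2, _⟩
    exact ⟨f, Finset.mem_filter.mpr ⟨Finset.mem_univ _, hf1, hf2⟩⟩

end MGraph

namespace MGraph

/-- The global counting inequality for admissible core graphs: if `A` is a set of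
vertices each carrying a leg, such that at most one member of `A` is a "bad
gadget", then `12 r + 4 |A| ≤ 18 (g−1) + 8 n + 2`. -/
lemma counting (G : MGraph) (g n r : ℕ)
    (hconn : G.Connected) (hadm : G.Admissible) (hcore : G.NoMarkedLegs)
    (htype : G.IsType g n r) (A : Finset G.V)
    (hA1 : ∀ w ∈ A, 1 ≤ (G.lgAt w).card)
    (hbad : ∀ w w', w ∈ A → w' ∈ A → w ≠ G.dv → w' ≠ G.dv →
      (G.nlAt w).card = 2 → (G.lgAt w).card = 1 → (G.Mk w).card = 2 →
      (G.nlAt w').card = 2 → (G.lgAt w').card = 1 → (G.Mk w').card = 2 → w = w') :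
    12 * (r : ℤ) + 4 * (A.card : ℤ) ≤ 18 * ((g : ℤ) - 1) + 8 * (n : ℤ) + 2 := by
  classical
  obtain ⟨htE, htn, htr⟩ := htype
  -- integer-valued local counts
  set s : G.V → ℤ := fun w => if w ∈ A then 1 else 0 with hs
  set L : G.V → ℤ := fun w => ((G.lgAt w).card : ℤ) with hL
  set e : G.V → ℤ := fun w => ((G.nlAt w).card : ℤ) with he
  set d : G.V → ℤ := fun w => ((G.Ddv w).card : ℤ) with hd
  set m : G.V → ℤ := fun w => ((G.Mk w).card : ℤ) with hm'
  have hsum_L : ∑ w : G.V, L w = (n : ℤ) := by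
    simp only [hL, ← Nat.cast_sum]
    exact_mod_cast htn ▸ G.sum_lgAt
  have hsum_e : ∑ w : G.V, e w = 2 * (G.numEdges : ℤ) := by
    simp only [he, ← Nat.cast_sum]
    exact_mod_cast G.sum_nlAt
  have hsum_d : ∑ w : G.V, d w = e G.dv := by
    simp only [hd, he, ← Nat.cast_sum]
    exact_mod_cast G.sum_Ddv
  have hsum_m : ∑ w : G.V, m w = (r : ℤ) := by
    simp only [hm', ← Nat.cast_sum]
    exact_mod_cast htr ▸ G.sum_Mk
  have hsum_s : ∑ w : G.V, s w = (A.card : ℤ) := by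
    rw [hs]
    rw [Finset.sum_ite_mem, Finset.univ_inter, Finset.sum_const, nsmul_eq_mul, mul_one]
  -- basic local inequalities
  have hsw : ∀ w, 0 ≤ s w ∧ s w ≤ 1 := by
    intro w; rw [hs]; dsimp only; split <;> simp
  have hsL : ∀ w, s w ≤ L w := by
    intro w; rw [hs, hL]; dsimp only
    split
    · exact_mod_cast hA1 _ ‹_›
    · positivity
  have hmd : ∀ w, w ≠ G.dv → m w ≤ d w := by
    intro w _; simp only [hm', hd]
    exact_mod_cast Finset.card_le_card (G.Mk_subset_Ddv hcore w)
  have hde : ∀ w, w ≠ G.dv → d w ≤ e w := by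
    intro w hw; simp only [hd, he]; exact_mod_cast G.Ddv_card_le w hw
  have hval : ∀ w, w ≠ G.dv → 3 ≤ L w + e w := by
    intro w hw; simp only [hL, he]; exact_mod_cast G.valence hadm w hw
  have hePos : ∀ w, w ≠ G.dv → 1 ≤ e w := by
    intro w hw; simp only [he]; exact_mod_cast G.nlAt_pos hconn w hw
  have hdvm : 2 * m G.dv ≤ d G.dv := by
    simp only [hm', hd]; exact_mod_cast G.two_Mk_dv_le hadm hcore
  -- the per-vertex quantity
  set Q : G.V → ℤ := fun w => 12 * m w + 4 * s w + 18 - 9 * e w - 9 * d w - 8 * L w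
    with hQ
  have hmpos : ∀ w, 0 ≤ m w := fun w => by rw [hm']; positivity
  have hLpos : ∀ w, 0 ≤ L w := fun w => by rw [hL]; positivity
  -- per-vertex bound and bad-vertex extraction
  have hQle : ∀ w, w ≠ G.dv → Q w ≤ 2 := by
    intro w hw
    have h1 := hmd w hw; have h2 := hde w hw; have h3 := hval w hw
    have h4 := hePos w hw; have h5 := hsw w; have h6 := hsL w
    have h7 := hmpos w; have h8 := hLpos w
    rw [hQ]; dsimp only; omega
  have hQbad : ∀ w, w ≠ G.dv → 0 < Q w →
      e w = 2 ∧ L w = 1 ∧ m w = 2 ∧ s w = 1 := by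
    intro w hw hQw
    have h1 := hmd w hw; have h2 := hde w hw; have h3 := hval w hw
    have h4 := hePos w hw; have h5 := hsw w; have h6 := hsL w
    have h7 := hmpos w; have h8 := hLpos w
    rw [hQ] at hQw; dsimp only at hQw; omega
  -- sum of Q over the neutral vertices
  set N : Finset G.V := Finset.univ.erase G.dv with hN
  have hQsum : ∑ w ∈ N, Q w ≤ 2 := by
    by_cases hex : ∃ w ∈ N, 0 < Q w
    · rcases hex with ⟨w0, hw0N, hw0⟩
      have hw0dv : w0 ≠ G.dv := (Finset.mem_erase.mp hw0N).1
      obtain ⟨hbe, hbL, hbm, hbs⟩ := hQbad w0 hw0dv hw0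
      have hw0A : w0 ∈ A := by
        by_contra hc; rw [hs] at hbs; simp [hc] at hbs
      have hrest : ∀ w ∈ N.erase w0, Q w ≤ 0 := by
        intro w hwN
        rcases Finset.mem_erase.mp hwN with ⟨hww0, hwN'⟩
        have hwdv : w ≠ G.dv := (Finset.mem_erase.mp hwN').1
        by_contra hc
        push_neg at hc
        obtain ⟨hbe', hbL', hbm', hbs'⟩ := hQbad w hwdv hc
        have hwA : w ∈ A := by
          by_contra hc2; rw [hs] at hbs'; simp [hc2] at hbs'
        simp only [he, hL, hm'] at hbe' hbL' hbm' hbe hbL hbm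
        refine hww0 (hbad w w0 hwA hw0A hwdv hw0dv ?_ ?_ ?_ ?_ ?_ ?_)
        · exact_mod_cast hbe'
        · exact_mod_cast hbL'
        · exact_mod_cast hbm'
        · exact_mod_cast hbe
        · exact_mod_cast hbL
        · exact_mod_cast hbm
      calc ∑ w ∈ N, Q w = Q w0 + ∑ w ∈ N.erase w0, Q w :=
            (Finset.add_sum_erase N Q hw0N).symm
        _ ≤ 2 + 0 := by
            gcongr
            · exact hQle w0 hw0dv
            · exact Finset.sum_nonpos hrest
        _ = 2 := by ring
    · push_neg at hex
      calc ∑ w ∈ N, Q w ≤ 0 := Finset.sum_nonpos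
            (fun w hw => hex w hw)
        _ ≤ 2 := by norm_num
  -- the distinguished-vertex inequality
  have hdv : 12 * m G.dv + 4 * s G.dv ≤ 9 * d G.dv + 8 * L G.dv := by
    have h5 := hsw G.dv; have h6 := hsL G.dv
    have h7 := hmpos G.dv; have h8 := hLpos G.dv
    omega
  -- assemble
  have hcardV : (Fintype.card G.V : ℤ) = (N.card : ℤ) + 1 := by
    rw [hN]
    rw [Finset.card_erase_of_mem (Finset.mem_univ _), Finset.card_univ]
    have : 1 ≤ Fintype.card G.V := Fintype.card_pos_iff.mpr G.nonemptyV
    push_cast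
    omega
  have hgE : 2 * (G.numEdges : ℤ) = 2 * (Fintype.card G.V : ℤ) + 2 * g - 4 := by
    have : (G.numEdges : ℤ) + 2 = (Fintype.card G.V : ℤ) + g := by exact_mod_cast htE
    omega
  -- decompose the sums over univ as dv + N
  have hdecomp : ∀ φ : G.V → ℤ, ∑ w : G.V, φ w = φ G.dv + ∑ w ∈ N, φ w := by
    intro φ
    rw [hN, Finset.add_sum_erase _ φ (Finset.mem_univ _)]
  have hQdef : ∑ w ∈ N, Q w = 12 * (∑ w ∈ N, m w) + 4 * (∑ w ∈ N, s w)
      + 18 * N.card - 9 * (∑ w ∈ N, e w) - 9 * (∑ w ∈ N, d w)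
      - 8 * (∑ w ∈ N, L w) := by
    rw [hQ]
    rw [Finset.sum_sub_distrib, Finset.sum_sub_distrib, Finset.sum_sub_distrib,
      Finset.sum_add_distrib, Finset.sum_add_distrib,
      ← Finset.mul_sum, ← Finset.mul_sum, ← Finset.mul_sum, ← Finset.mul_sum,
      ← Finset.mul_sum, Finset.sum_const]
    push_cast
    ring
  have e1 := hdecomp L; have e2 := hdecomp e; have e3 := hdecomp d
  have e4 := hdecomp m; have e5 := hdecomp s
  rw [hsum_L] at e1; rw [hsum_e] at e2; rw [hsum_d] at e3
  rw [hsum_m] at e4; rw [hsum_s] at e5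
  -- now pure linear arithmetic
  have key : 18 * ((g:ℤ) - 1) = 9 * (2 * (G.numEdges : ℤ)) - 18 * ((N.card : ℤ)) := by
    omega
  omega

end MGraph

namespace MGraph

variable {n : ℕ}

/-- Two leg labels form a positive pair if their transposition lies in `I_γ`
via a label-preserving isomorphism with trivial determinant character. -/
def PosPair (G : MGraph) (lab : Fin n ≃ {f : G.F // G.ι f = f}) (i j : Fin n) :
    Prop :=
  ∃ eV eF, ∃ h : G.IsIso (G.relabel (Equiv.swap i j) lab) lab eV eF,
    chi eF h.comm_ι h.mem_marked = 1

/-- If the flag permutation fixes every non-leg flag, the induced edge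
permutation is trivial. -/
lemma edgePerm_eq_one {G : MGraph} (eF : Equiv.Perm G.F)
    (hι : ∀ f, G.ι (eF f) = eF (G.ι f))
    (hfix : ∀ f : G.F, G.ι f ≠ f → eF f = f) :
    edgePerm eF hι = 1 := by
  refine Equiv.ext fun z => ?_
  induction z using Quotient.inductionOn with
  | h z =>
    show Quotient.congr (nonLegEquiv eF hι) _ (Quotient.mk _ z) = Quotient.mk _ z
    rw [Quotient.congr_mk]
    congr 1
    exact Subtype.ext (hfix z.1 z.2)

/-- If the flag permutation fixes every marked flag, the induced marked
permutation is trivial. -/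
lemma markedPerm_eq_one {G : MGraph} (eF : Equiv.Perm G.F)
    (hm : ∀ f, f ∈ G.marked ↔ eF f ∈ G.marked)
    (hfix : ∀ f : G.F, f ∈ G.marked → eF f = f) :
    markedPerm eF hm = 1 := by
  refine Equiv.ext fun z => ?_
  exact Subtype.ext (hfix z.1 z.2)

/-- Two distinct legs at the same vertex form a positive pair. -/
lemma posPair_same_vertex (G : MGraph) (lab : Fin n ≃ {f : G.F // G.ι f = f})
    (hcore : G.NoMarkedLegs) (i j : Fin n) (hij : i ≠ j)
    (hv : G.a (lab i : G.F) = G.a (lab j : G.F)) :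
    PosPair G lab i j := by
  classical
  set l₁ : G.F := (lab i : G.F) with hl₁
  set l₂ : G.F := (lab j : G.F) with hl₂
  have hll : l₁ ≠ l₂ := by
    intro hc
    exact hij (lab.injective (Subtype.ext hc))
  have hleg₁ : G.ι l₁ = l₁ := (lab i).2
  have hleg₂ : G.ι l₂ = l₂ := (lab j).2
  set eF : Equiv.Perm G.F := Equiv.swap l₁ l₂ with heF
  have hnl_fix : ∀ f : G.F, G.ι f ≠ f → eF f = f := by
    intro f hf
    refine Equiv.swap_apply_of_ne_of_ne ?_ ?_
    · rintro rfl; exact hf hleg₁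
    · rintro rfl; exact hf hleg₂
  have hmk_fix : ∀ f : G.F, f ∈ G.marked → eF f = f := by
    intro f hf
    exact hnl_fix f (hcore f hf)
  have hiso : G.IsIso (G.relabel (Equiv.swap i j) lab) lab 1 eF := by
    constructor
    · intro f
      simp only [Equiv.Perm.one_apply]
      rcases eq_or_ne f l₁ with rfl | h1
      · rw [heF, Equiv.swap_apply_left]; exact hv.symm
      rcases eq_or_ne f l₂ with rfl | h2
      · rw [heF, Equiv.swap_apply_right]; exact hv
      · rw [heF, Equiv.swap_apply_of_ne_of_ne h1 h2]
    · intro f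
      rcases eq_or_ne f l₁ with rfl | h1
      · rw [heF, Equiv.swap_apply_left, hleg₂, hleg₁, Equiv.swap_apply_left]
      rcases eq_or_ne f l₂ with rfl | h2
      · rw [heF, Equiv.swap_apply_right, hleg₁, hleg₂, Equiv.swap_apply_right]
      · have hι1 : G.ι f ≠ l₁ := fun hc => h1 (by rw [← G.ι_invol f, hc, hleg₁])
        have hι2 : G.ι f ≠ l₂ := fun hc => h2 (by rw [← G.ι_invol f, hc, hleg₂])
        rw [heF, Equiv.swap_apply_of_ne_of_ne h1 h2,
          Equiv.swap_apply_of_ne_of_ne hι1 hι2]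
    · rfl
    · intro f
      constructor
      · intro hf; rw [hmk_fix f hf]; exact hf
      · intro hf
        rcases eq_or_ne f l₁ with rfl | h1
        · rw [heF, Equiv.swap_apply_left] at hf
          exact absurd hleg₂ (hcore _ hf)
        rcases eq_or_ne f l₂ with rfl | h2
        · rw [heF, Equiv.swap_apply_right] at hf
          exact absurd hleg₁ (hcore _ hf)
        · rwa [heF, Equiv.swap_apply_of_ne_of_ne h1 h2] at hf
    · intro i'
      show (eF ((lab ((Equiv.swap i j).symm i') : G.F)) = _)
      rw [Equiv.symm_swap]
      rcases eq_or_ne i' i with rfl | hi'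
      · rw [Equiv.swap_apply_left, ← hl₂, heF, Equiv.swap_apply_right]
      rcases eq_or_ne i' j with rfl | hj'
      · rw [Equiv.swap_apply_right, ← hl₁, heF, Equiv.swap_apply_left]
      · rw [Equiv.swap_apply_of_ne_of_ne hi' hj']
        refine Equiv.swap_apply_of_ne_of_ne ?_ ?_
        · exact fun hc => hi' (lab.injective (Subtype.ext hc))
        · exact fun hc => hj' (lab.injective (Subtype.ext hc))
  refine ⟨1, eF, hiso, ?_⟩
  rw [chi, edgePerm_eq_one eF hiso.comm_ι hnl_fix,
    markedPerm_eq_one eF hiso.mem_marked hmk_fix]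
  simp

end MGraph

section RepLemma

open MGraph

variable {n : ℕ}

lemma viaEmbedding_swap {k : ℕ} (hk : k ≤ n) (a b : Fin k) :
    Equiv.Perm.viaEmbeddingHom (Fin.castLEEmb hk) (Equiv.swap a b) =
      Equiv.swap (Fin.castLE hk a) (Fin.castLE hk b) := by
  rw [Equiv.Perm.viaEmbeddingHom_apply]
  refine Equiv.ext fun x => ?_
  by_cases hx : x ∈ Set.range (Fin.castLEEmb hk)
  · rcases hx with ⟨c, rfl⟩
    rw [Equiv.Perm.viaEmbedding_apply]
    have hinj : Function.Injective (Fin.castLE hk) := Fin.castLE_injective hk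
    simp only [Fin.coe_castLEEmb]
    rcases eq_or_ne c a with rfl | hca
    · rw [Equiv.swap_apply_left, Equiv.swap_apply_left]
    rcases eq_or_ne c b with rfl | hcb
    · rw [Equiv.swap_apply_right, Equiv.swap_apply_right]
    · rw [Equiv.swap_apply_of_ne_of_ne hca hcb,
        Equiv.swap_apply_of_ne_of_ne (fun hc => hca (hinj hc))
          (fun hc => hcb (hinj hc))]
  · rw [Equiv.Perm.viaEmbedding_apply_of_notMem _ _ x hx]
    refine (Equiv.swap_apply_of_ne_of_ne ?_ ?_).symm
    · exact fun hc => hx ⟨a, hc.symm⟩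
    · exact fun hc => hx ⟨b, hc.symm⟩

lemma vanish_of_posPair (G : MGraph) (lab : Fin n ≃ {f : G.F // G.ι f = f})
    (H : Subgroup (Equiv.Perm (Fin n)))
    (hH : (H : Set (Equiv.Perm (Fin n))) = G.ISet lab)
    (θ : Representation ℚ H (G.detCoinv lab))
    (hθ : G.CanonicalCoinvRep lab H θ)
    {k : ℕ} (hk : k ≤ n) (v : indCarrier H θ)
    (hsgn : ∀ σ : Equiv.Perm (Fin k),
      indRep H θ (Equiv.Perm.viaEmbeddingHom (Fin.castLEEmb hk) σ) v =
        ((Equiv.Perm.sign σ : ℤ) : ℚ) • v)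
    (p : Equiv.Perm (Fin n)) (a b : Fin k) (hab : a ≠ b)
    (hpp : PosPair G lab (p (Fin.castLE hk a)) (p (Fin.castLE hk b))) :
    (v : Equiv.Perm (Fin n) → G.detCoinv lab) p = 0 := by
  classical
  set i : Fin n := p (Fin.castLE hk a) with hi
  set j : Fin n := p (Fin.castLE hk b) with hj
  set τ : Equiv.Perm (Fin n) := Equiv.swap i j with hτdef
  obtain ⟨eV, eF, hiso, hchi⟩ := hpp
  have hτH : τ ∈ H := by
    have : τ ∈ (H : Set (Equiv.Perm (Fin n))) ↔ τ ∈ G.ISet lab := by rw [hH]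
    exact this.mpr ⟨eV, eF, hiso⟩
  -- θ acts trivially via τ
  have hθτ : ∀ y : G.detCoinv lab, θ ⟨τ, hτH⟩ y = y := by
    intro y
    obtain ⟨x, rfl⟩ := Submodule.mkQ_surjective (G.coinvKer lab) y
    have := hθ τ hτH eV eF hiso x
    rw [detCoinvMk] at this
    rw [this, hchi]
    norm_num
  -- the equivariance property of v at τ
  have hv2 : (v : Equiv.Perm (Fin n) → G.detCoinv lab) (τ * p) =
      θ ⟨τ, hτH⟩ ((v : Equiv.Perm (Fin n) → G.detCoinv lab) p) := v.2 ⟨τ, hτH⟩ p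
  -- the sign property of v at the swap
  have hsw := hsgn (Equiv.swap a b)
  rw [viaEmbedding_swap hk a b, Equiv.Perm.sign_swap hab] at hsw
  have hfun := congrArg (Subtype.val) hsw
  have heval := congrFun hfun p
  have hlhs : ((indRep H θ (Equiv.swap (Fin.castLE hk a) (Fin.castLE hk b)) v) :
      Equiv.Perm (Fin n) → G.detCoinv lab) p =
      (v : Equiv.Perm (Fin n) → G.detCoinv lab)
        (p * Equiv.swap (Fin.castLE hk a) (Fin.castLE hk b)) := rfl
  have hmul : p * Equiv.swap (Fin.castLE hk a) (Fin.castLE hk b) = τ * p := by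
    rw [hτdef, hi, hj]
    exact Equiv.mul_swap_eq_swap_mul p _ _
  rw [hlhs, hmul, hv2, hθτ] at heval
  -- now heval : v p = (-1 : ℚ) • v p
  have hsmul : ((((((-1 : ℤˣ) : ℤ) : ℚ)) • v : indCarrier H θ) :
      Equiv.Perm (Fin n) → G.detCoinv lab) p =
      ((((-1 : ℤˣ) : ℤ) : ℚ)) • ((v : Equiv.Perm (Fin n) → G.detCoinv lab) p) :=
    rfl
  have hneg : (v : Equiv.Perm (Fin n) → G.detCoinv lab) p =
      -((v : Equiv.Perm (Fin n) → G.detCoinv lab) p) := by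
    conv_lhs => rw [heval, hsmul]
    push_cast
    rw [neg_smul, one_smul]
  have h2 : (2 : ℚ) • (v : Equiv.Perm (Fin n) → G.detCoinv lab) p = 0 := by
    rw [two_smul]
    nth_rewrite 1 [hneg]
    abel
  rcases smul_eq_zero.mp h2 with hc | hc
  · norm_num at hc
  · exact hc

end RepLemma

namespace MGraph

variable {n : ℕ}

/-- Legs at two distinct "bad gadget" vertices (one leg, two non-leg flags, both
partnered with marked flags at the distinguished vertex) form a positive pair. -/
lemma posPair_bad (G : MGraph) (lab : Fin n ≃ {f : G.F // G.ι f = f})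
    (hadm : G.Admissible) (hcore : G.NoMarkedLegs)
    (w w' : G.V) (hwdv : w ≠ G.dv) (hw'dv : w' ≠ G.dv) (hww' : w ≠ w')
    (i j : Fin n) (hi : G.a (lab i : G.F) = w) (hj : G.a (lab j : G.F) = w')
    (hLw : (G.lgAt w).card = 1) (hLw' : (G.lgAt w').card = 1)
    (hew : (G.nlAt w).card = 2) (hew' : (G.nlAt w').card = 2)
    (hmw : (G.Mk w).card = 2) (hmw' : (G.Mk w').card = 2) :
    PosPair G lab i j := by
  classical
  -- helpers
  have hne_a : ∀ z u : G.F, G.a z ≠ G.a u → z ≠ u :=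
    fun z u h hc => h (congrArg G.a hc)
  -- extract the marked pairs
  obtain ⟨y₁, y₂, hy12, hMkw⟩ := Finset.card_eq_two.mp hmw
  obtain ⟨y₁', y₂', hy12', hMkw'⟩ := Finset.card_eq_two.mp hmw'
  have hy₁M : y₁ ∈ G.Mk w := by rw [hMkw]; simp
  have hy₂M : y₂ ∈ G.Mk w := by rw [hMkw]; simp
  have hy₁'M : y₁' ∈ G.Mk w' := by rw [hMkw']; simp
  have hy₂'M : y₂' ∈ G.Mk w' := by rw [hMkw']; simp
  have hy₁m : y₁ ∈ G.marked := (Finset.mem_filter.mp hy₁M).1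
  have hy₂m : y₂ ∈ G.marked := (Finset.mem_filter.mp hy₂M).1
  have hy₁'m : y₁' ∈ G.marked := (Finset.mem_filter.mp hy₁'M).1
  have hy₂'m : y₂' ∈ G.marked := (Finset.mem_filter.mp hy₂'M).1
  have hy₁p : G.a (G.ι y₁) = w := (Finset.mem_filter.mp hy₁M).2
  have hy₂p : G.a (G.ι y₂) = w := (Finset.mem_filter.mp hy₂M).2
  have hy₁'p : G.a (G.ι y₁') = w' := (Finset.mem_filter.mp hy₁'M).2
  have hy₂'p : G.a (G.ι y₂') = w' := (Finset.mem_filter.mp hy₂'M).2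
  have hy₁dv : G.a y₁ = G.dv := G.marked_adj y₁ hy₁m
  have hy₂dv : G.a y₂ = G.dv := G.marked_adj y₂ hy₂m
  have hy₁'dv : G.a y₁' = G.dv := G.marked_adj y₁' hy₁'m
  have hy₂'dv : G.a y₂' = G.dv := G.marked_adj y₂' hy₂'m
  have hy₁nl : G.ι y₁ ≠ y₁ := hcore y₁ hy₁m
  have hy₂nl : G.ι y₂ ≠ y₂ := hcore y₂ hy₂m
  have hy₁'nl : G.ι y₁' ≠ y₁' := hcore y₁' hy₁'m
  have hy₂'nl : G.ι y₂' ≠ y₂' := hcore y₂' hy₂'m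
  -- partner flags
  set x₁ : G.F := G.ι y₁ with hx₁def
  set x₂ : G.F := G.ι y₂ with hx₂def
  set x₁' : G.F := G.ι y₁' with hx₁'def
  set x₂' : G.F := G.ι y₂' with hx₂'def
  have hιx₁ : G.ι x₁ = y₁ := G.ι_invol y₁
  have hιx₂ : G.ι x₂ = y₂ := G.ι_invol y₂
  have hιx₁' : G.ι x₁' = y₁' := G.ι_invol y₁'
  have hιx₂' : G.ι x₂' = y₂' := G.ι_invol y₂'
  have hx₁nl : G.ι x₁ ≠ x₁ := by
    rw [hιx₁]; exact fun hc => hy₁nl hc.symm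
  have hx₂nl : G.ι x₂ ≠ x₂ := by
    rw [hιx₂]; exact fun hc => hy₂nl hc.symm
  have hx₁'nl : G.ι x₁' ≠ x₁' := by
    rw [hιx₁']; exact fun hc => hy₁'nl hc.symm
  have hx₂'nl : G.ι x₂' ≠ x₂' := by
    rw [hιx₂']; exact fun hc => hy₂'nl hc.symm
  have hx₁w : G.a x₁ = w := hy₁p
  have hx₂w : G.a x₂ = w := hy₂p
  have hx₁'w : G.a x₁' = w' := hy₁'p
  have hx₂'w : G.a x₂' = w' := hy₂'p
  have hx12 : x₁ ≠ x₂ := fun hc => hy12 (G.ι_injective hc)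
  have hx12' : x₁' ≠ x₂' := fun hc => hy12' (G.ι_injective hc)
  -- the legs
  set l : G.F := (lab i : G.F) with hldef
  set l' : G.F := (lab j : G.F) with hl'def
  have hl_leg : G.ι l = l := (lab i).2
  have hl'_leg : G.ι l' = l' := (lab j).2
  have hlw : G.a l = w := hi
  have hl'w : G.a l' = w' := hj
  -- coverage of the flags at w and w'
  have hlegw : ∀ z, G.ι z = z → G.a z = w → z = l := by
    intro z hz1 hz2
    exact mem_of_card_one hLw
      (Finset.mem_filter.mpr ⟨Finset.mem_univ _, hl_leg, hlw⟩) z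
      (Finset.mem_filter.mpr ⟨Finset.mem_univ _, hz1, hz2⟩)
  have hlegw' : ∀ z, G.ι z = z → G.a z = w' → z = l' := by
    intro z hz1 hz2
    exact mem_of_card_one hLw'
      (Finset.mem_filter.mpr ⟨Finset.mem_univ _, hl'_leg, hl'w⟩) z
      (Finset.mem_filter.mpr ⟨Finset.mem_univ _, hz1, hz2⟩)
  have hnlw : ∀ z, G.ι z ≠ z → G.a z = w → z = x₁ ∨ z = x₂ := by
    intro z hz1 hz2
    exact mem_of_card_two hew hx12
      (Finset.mem_filter.mpr ⟨Finset.mem_univ _, hx₁nl, hx₁w⟩)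
      (Finset.mem_filter.mpr ⟨Finset.mem_univ _, hx₂nl, hx₂w⟩) z
      (Finset.mem_filter.mpr ⟨Finset.mem_univ _, hz1, hz2⟩)
  have hnlw' : ∀ z, G.ι z ≠ z → G.a z = w' → z = x₁' ∨ z = x₂' := by
    intro z hz1 hz2
    exact mem_of_card_two hew' hx12'
      (Finset.mem_filter.mpr ⟨Finset.mem_univ _, hx₁'nl, hx₁'w⟩)
      (Finset.mem_filter.mpr ⟨Finset.mem_univ _, hx₂'nl, hx₂'w⟩) z
      (Finset.mem_filter.mpr ⟨Finset.mem_univ _, hz1, hz2⟩)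
  -- inequality database
  have hlnl : ∀ z, G.ι z ≠ z → l ≠ z := fun z hz hc => hz (by rw [← hc, hl_leg])
  have hl'nl : ∀ z, G.ι z ≠ z → l' ≠ z := fun z hz hc => hz (by rw [← hc, hl'_leg])
  have hll' : l ≠ l' := hne_a _ _ (by rw [hlw, hl'w]; exact hww')
  have hx₁y₁ : x₁ ≠ y₁ := hne_a _ _ (by rw [hx₁w, hy₁dv]; exact hwdv)
  have hx₁y₂ : x₁ ≠ y₂ := hne_a _ _ (by rw [hx₁w, hy₂dv]; exact hwdv)
  have hx₁y₁' : x₁ ≠ y₁' := hne_a _ _ (by rw [hx₁w, hy₁'dv]; exact hwdv)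
  have hx₁y₂' : x₁ ≠ y₂' := hne_a _ _ (by rw [hx₁w, hy₂'dv]; exact hwdv)
  have hx₂y₁ : x₂ ≠ y₁ := hne_a _ _ (by rw [hx₂w, hy₁dv]; exact hwdv)
  have hx₂y₂ : x₂ ≠ y₂ := hne_a _ _ (by rw [hx₂w, hy₂dv]; exact hwdv)
  have hx₂y₁' : x₂ ≠ y₁' := hne_a _ _ (by rw [hx₂w, hy₁'dv]; exact hwdv)
  have hx₂y₂' : x₂ ≠ y₂' := hne_a _ _ (by rw [hx₂w, hy₂'dv]; exact hwdv)
  have hx₁'y₁ : x₁' ≠ y₁ := hne_a _ _ (by rw [hx₁'w, hy₁dv]; exact hw'dv)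
  have hx₁'y₂ : x₁' ≠ y₂ := hne_a _ _ (by rw [hx₁'w, hy₂dv]; exact hw'dv)
  have hx₁'y₁' : x₁' ≠ y₁' := hne_a _ _ (by rw [hx₁'w, hy₁'dv]; exact hw'dv)
  have hx₁'y₂' : x₁' ≠ y₂' := hne_a _ _ (by rw [hx₁'w, hy₂'dv]; exact hw'dv)
  have hx₂'y₁ : x₂' ≠ y₁ := hne_a _ _ (by rw [hx₂'w, hy₁dv]; exact hw'dv)
  have hx₂'y₂ : x₂' ≠ y₂ := hne_a _ _ (by rw [hx₂'w, hy₂dv]; exact hw'dv)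
  have hx₂'y₁' : x₂' ≠ y₁' := hne_a _ _ (by rw [hx₂'w, hy₁'dv]; exact hw'dv)
  have hx₂'y₂' : x₂' ≠ y₂' := hne_a _ _ (by rw [hx₂'w, hy₂'dv]; exact hw'dv)
  have hx₁x₂' : x₁ ≠ x₂' := hne_a _ _ (by rw [hx₁w, hx₂'w]; exact hww')
  have hx₁x₁' : x₁ ≠ x₁' := hne_a _ _ (by rw [hx₁w, hx₁'w]; exact hww')
  have hx₂x₁' : x₂ ≠ x₁' := hne_a _ _ (by rw [hx₂w, hx₁'w]; exact hww')
  have hx₂x₂' : x₂ ≠ x₂' := hne_a _ _ (by rw [hx₂w, hx₂'w]; exact hww')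
  have hy₁y₁' : y₁ ≠ y₁' := fun hc => hx₁x₁' (congrArg G.ι hc)
  have hy₁y₂' : y₁ ≠ y₂' := fun hc => hx₁x₂' (congrArg G.ι hc)
  have hy₂y₁' : y₂ ≠ y₁' := fun hc => hx₂x₁' (congrArg G.ι hc)
  have hy₂y₂' : y₂ ≠ y₂' := fun hc => hx₂x₂' (congrArg G.ι hc)
  -- the flag permutation
  set eF : Equiv.Perm G.F :=
    Equiv.swap l l' * (Equiv.swap x₁ x₁' * (Equiv.swap x₂ x₂' *
      (Equiv.swap y₁ y₁' * Equiv.swap y₂ y₂'))) with heF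
  have heF_apply : ∀ z, eF z = Equiv.swap l l' (Equiv.swap x₁ x₁'
      (Equiv.swap x₂ x₂' (Equiv.swap y₁ y₁' (Equiv.swap y₂ y₂' z)))) := by
    intro z; rw [heF]; rfl
  -- evaluations
  have hefl : eF l = l' := by
    rw [heF_apply,
      Equiv.swap_apply_of_ne_of_ne (hlnl _ hy₂nl) (hlnl _ hy₂'nl),
      Equiv.swap_apply_of_ne_of_ne (hlnl _ hy₁nl) (hlnl _ hy₁'nl),
      Equiv.swap_apply_of_ne_of_ne (hlnl _ hx₂nl) (hlnl _ hx₂'nl),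
      Equiv.swap_apply_of_ne_of_ne (hlnl _ hx₁nl) (hlnl _ hx₁'nl),
      Equiv.swap_apply_left]
  have hefl' : eF l' = l := by
    rw [heF_apply,
      Equiv.swap_apply_of_ne_of_ne (hl'nl _ hy₂nl) (hl'nl _ hy₂'nl),
      Equiv.swap_apply_of_ne_of_ne (hl'nl _ hy₁nl) (hl'nl _ hy₁'nl),
      Equiv.swap_apply_of_ne_of_ne (hl'nl _ hx₂nl) (hl'nl _ hx₂'nl),
      Equiv.swap_apply_of_ne_of_ne (hl'nl _ hx₁nl) (hl'nl _ hx₁'nl),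
      Equiv.swap_apply_right]
  have hefx₁ : eF x₁ = x₁' := by
    rw [heF_apply,
      Equiv.swap_apply_of_ne_of_ne hx₁y₂ hx₁y₂',
      Equiv.swap_apply_of_ne_of_ne hx₁y₁ hx₁y₁',
      Equiv.swap_apply_of_ne_of_ne hx12 hx₁x₂',
      Equiv.swap_apply_left,
      Equiv.swap_apply_of_ne_of_ne (hlnl _ hx₁'nl).symm (hl'nl _ hx₁'nl).symm]
  have hefx₁' : eF x₁' = x₁ := by
    rw [heF_apply,
      Equiv.swap_apply_of_ne_of_ne hx₁'y₂ hx₁'y₂',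
      Equiv.swap_apply_of_ne_of_ne hx₁'y₁ hx₁'y₁',
      Equiv.swap_apply_of_ne_of_ne hx₂x₁'.symm hx12',
      Equiv.swap_apply_right,
      Equiv.swap_apply_of_ne_of_ne (hlnl _ hx₁nl).symm (hl'nl _ hx₁nl).symm]
  have hefx₂ : eF x₂ = x₂' := by
    rw [heF_apply,
      Equiv.swap_apply_of_ne_of_ne hx₂y₂ hx₂y₂',
      Equiv.swap_apply_of_ne_of_ne hx₂y₁ hx₂y₁',
      Equiv.swap_apply_left,
      Equiv.swap_apply_of_ne_of_ne hx₁x₂'.symm hx12'.symm,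
      Equiv.swap_apply_of_ne_of_ne (hlnl _ hx₂'nl).symm (hl'nl _ hx₂'nl).symm]
  have hefx₂' : eF x₂' = x₂ := by
    rw [heF_apply,
      Equiv.swap_apply_of_ne_of_ne hx₂'y₂ hx₂'y₂',
      Equiv.swap_apply_of_ne_of_ne hx₂'y₁ hx₂'y₁',
      Equiv.swap_apply_right,
      Equiv.swap_apply_of_ne_of_ne hx12.symm hx₂x₁',
      Equiv.swap_apply_of_ne_of_ne (hlnl _ hx₂nl).symm (hl'nl _ hx₂nl).symm]
  have hefy₁ : eF y₁ = y₁' := by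
    rw [heF_apply,
      Equiv.swap_apply_of_ne_of_ne hy12 hy₁y₂',
      Equiv.swap_apply_left,
      Equiv.swap_apply_of_ne_of_ne hx₂y₁'.symm hx₂'y₁'.symm,
      Equiv.swap_apply_of_ne_of_ne hx₁y₁'.symm hx₁'y₁'.symm,
      Equiv.swap_apply_of_ne_of_ne (hlnl _ hy₁'nl).symm (hl'nl _ hy₁'nl).symm]
  have hefy₁' : eF y₁' = y₁ := by
    rw [heF_apply,
      Equiv.swap_apply_of_ne_of_ne hy₂y₁'.symm hy12',
      Equiv.swap_apply_right,
      Equiv.swap_apply_of_ne_of_ne hx₂y₁.symm hx₂'y₁.symm,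
      Equiv.swap_apply_of_ne_of_ne hx₁y₁.symm hx₁'y₁.symm,
      Equiv.swap_apply_of_ne_of_ne (hlnl _ hy₁nl).symm (hl'nl _ hy₁nl).symm]
  have hefy₂ : eF y₂ = y₂' := by
    rw [heF_apply,
      Equiv.swap_apply_left,
      Equiv.swap_apply_of_ne_of_ne hy₁y₂'.symm hy12'.symm,
      Equiv.swap_apply_of_ne_of_ne hx₂y₂'.symm hx₂'y₂'.symm,
      Equiv.swap_apply_of_ne_of_ne hx₁y₂'.symm hx₁'y₂'.symm,
      Equiv.swap_apply_of_ne_of_ne (hlnl _ hy₂'nl).symm (hl'nl _ hy₂'nl).symm]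
  have hefy₂' : eF y₂' = y₂ := by
    rw [heF_apply,
      Equiv.swap_apply_right,
      Equiv.swap_apply_of_ne_of_ne hy12.symm hy₂y₁',
      Equiv.swap_apply_of_ne_of_ne hx₂y₂.symm hx₂'y₂.symm,
      Equiv.swap_apply_of_ne_of_ne hx₁y₂.symm hx₁'y₂.symm,
      Equiv.swap_apply_of_ne_of_ne (hlnl _ hy₂nl).symm (hl'nl _ hy₂nl).symm]
  have hfix : ∀ z, G.a z ≠ w → G.a z ≠ w' →
      z ≠ y₁ → z ≠ y₂ → z ≠ y₁' → z ≠ y₂' → eF z = z := by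
    intro z h1 h2 h3 h4 h5 h6
    have hzx₁ : z ≠ x₁ := fun hc => h1 (hc ▸ hx₁w)
    have hzx₂ : z ≠ x₂ := fun hc => h1 (hc ▸ hx₂w)
    have hzx₁' : z ≠ x₁' := fun hc => h2 (hc ▸ hx₁'w)
    have hzx₂' : z ≠ x₂' := fun hc => h2 (hc ▸ hx₂'w)
    have hzl : z ≠ l := fun hc => h1 (hc ▸ hlw)
    have hzl' : z ≠ l' := fun hc => h2 (hc ▸ hl'w)
    rw [heF_apply,
      Equiv.swap_apply_of_ne_of_ne h4 h6,
      Equiv.swap_apply_of_ne_of_ne h3 h5,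
      Equiv.swap_apply_of_ne_of_ne hzx₂ hzx₂',
      Equiv.swap_apply_of_ne_of_ne hzx₁ hzx₁',
      Equiv.swap_apply_of_ne_of_ne hzl hzl']
  -- generic coverage: a flag not among the ten is fixed
  have hgen : ∀ f : G.F, f ≠ l → f ≠ l' → f ≠ x₁ → f ≠ x₂ → f ≠ x₁' → f ≠ x₂' →
      f ≠ y₁ → f ≠ y₂ → f ≠ y₁' → f ≠ y₂' → eF f = f := by
    intro f h1 h2 h3 h4 h5 h6 h7 h8 h9 h10
    have haw : G.a f ≠ w := by
      intro hc
      by_cases hleg : G.ι f = f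
      · exact h1 (hlegw f hleg hc)
      · rcases hnlw f hleg hc with rfl | rfl
        · exact h3 rfl
        · exact h4 rfl
    have haw' : G.a f ≠ w' := by
      intro hc
      by_cases hleg : G.ι f = f
      · exact h2 (hlegw' f hleg hc)
      · rcases hnlw' f hleg hc with rfl | rfl
        · exact h5 rfl
        · exact h6 rfl
    exact hfix f haw haw' h7 h8 h9 h10
  -- the isomorphism
  have hiso : G.IsIso (G.relabel (Equiv.swap i j) lab) lab (Equiv.swap w w') eF := by
    constructor
    · -- comm_a
      intro f
      rcases eq_or_ne f l with rfl | h1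
      · rw [hefl, hl'w, hlw, Equiv.swap_apply_left]
      rcases eq_or_ne f l' with rfl | h2
      · rw [hefl', hlw, hl'w, Equiv.swap_apply_right]
      rcases eq_or_ne f x₁ with rfl | h3
      · rw [hefx₁, hx₁'w, hx₁w, Equiv.swap_apply_left]
      rcases eq_or_ne f x₂ with rfl | h4
      · rw [hefx₂, hx₂'w, hx₂w, Equiv.swap_apply_left]
      rcases eq_or_ne f x₁' with rfl | h5
      · rw [hefx₁', hx₁w, hx₁'w, Equiv.swap_apply_right]
      rcases eq_or_ne f x₂' with rfl | h6
      · rw [hefx₂', hx₂w, hx₂'w, Equiv.swap_apply_right]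
      rcases eq_or_ne f y₁ with rfl | h7
      · rw [hefy₁, hy₁'dv, hy₁dv,
          Equiv.swap_apply_of_ne_of_ne (Ne.symm hwdv) (Ne.symm hw'dv)]
      rcases eq_or_ne f y₂ with rfl | h8
      · rw [hefy₂, hy₂'dv, hy₂dv,
          Equiv.swap_apply_of_ne_of_ne (Ne.symm hwdv) (Ne.symm hw'dv)]
      rcases eq_or_ne f y₁' with rfl | h9
      · rw [hefy₁', hy₁dv, hy₁'dv,
          Equiv.swap_apply_of_ne_of_ne (Ne.symm hwdv) (Ne.symm hw'dv)]
      rcases eq_or_ne f y₂' with rfl | h10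
      · rw [hefy₂', hy₂dv, hy₂'dv,
          Equiv.swap_apply_of_ne_of_ne (Ne.symm hwdv) (Ne.symm hw'dv)]
      · have haw : G.a f ≠ w := by
          intro hc
          by_cases hleg : G.ι f = f
          · exact h1 (hlegw f hleg hc)
          · rcases hnlw f hleg hc with rfl | rfl
            · exact h3 rfl
            · exact h4 rfl
        have haw' : G.a f ≠ w' := by
          intro hc
          by_cases hleg : G.ι f = f
          · exact h2 (hlegw' f hleg hc)
          · rcases hnlw' f hleg hc with rfl | rfl
            · exact h5 rfl
            · exact h6 rfl
        rw [hgen f h1 h2 h3 h4 h5 h6 h7 h8 h9 h10,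
          Equiv.swap_apply_of_ne_of_ne haw haw']
    · -- comm_ι
      intro f
      rcases eq_or_ne f l with rfl | h1
      · rw [hefl, hl'_leg, hl_leg, hefl]
      rcases eq_or_ne f l' with rfl | h2
      · rw [hefl', hl_leg, hl'_leg, hefl']
      rcases eq_or_ne f x₁ with rfl | h3
      · rw [hefx₁, hιx₁', hιx₁, hefy₁]
      rcases eq_or_ne f x₂ with rfl | h4
      · rw [hefx₂, hιx₂', hιx₂, hefy₂]
      rcases eq_or_ne f x₁' with rfl | h5
      · rw [hefx₁', hιx₁, hιx₁', hefy₁']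
      rcases eq_or_ne f x₂' with rfl | h6
      · rw [hefx₂', hιx₂, hιx₂', hefy₂']
      rcases eq_or_ne f y₁ with rfl | h7
      · rw [hefy₁, ← hx₁'def, ← hx₁def, hefx₁]
      rcases eq_or_ne f y₂ with rfl | h8
      · rw [hefy₂, ← hx₂'def, ← hx₂def, hefx₂]
      rcases eq_or_ne f y₁' with rfl | h9
      · rw [hefy₁', ← hx₁def, ← hx₁'def, hefx₁']
      rcases eq_or_ne f y₂' with rfl | h10
      · rw [hefy₂', ← hx₂def, ← hx₂'def, hefx₂']
      · rw [hgen f h1 h2 h3 h4 h5 h6 h7 h8 h9 h10]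
        refine (hgen (G.ι f) ?_ ?_ ?_ ?_ ?_ ?_ ?_ ?_ ?_ ?_).symm
        · exact fun hc => h1 (by rw [← G.ι_invol f, hc, hl_leg])
        · exact fun hc => h2 (by rw [← G.ι_invol f, hc, hl'_leg])
        · exact fun hc => h7 (by rw [← G.ι_invol f, hc, hιx₁])
        · exact fun hc => h8 (by rw [← G.ι_invol f, hc, hιx₂])
        · exact fun hc => h9 (by rw [← G.ι_invol f, hc, hιx₁'])
        · exact fun hc => h10 (by rw [← G.ι_invol f, hc, hιx₂'])
        · exact fun hc => h3 (by rw [← G.ι_invol f, hc, ← hx₁def])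
        · exact fun hc => h4 (by rw [← G.ι_invol f, hc, ← hx₂def])
        · exact fun hc => h5 (by rw [← G.ι_invol f, hc, ← hx₁'def])
        · exact fun hc => h6 (by rw [← G.ι_invol f, hc, ← hx₂'def])
    · -- fix_dv
      exact Equiv.swap_apply_of_ne_of_ne (Ne.symm hwdv) (Ne.symm hw'dv)
    · -- mem_marked
      intro f
      rcases eq_or_ne f l with rfl | h1
      · exact iff_of_false (fun hm' => hcore _ hm' hl_leg)
          (by rw [hefl]; exact fun hm' => hcore _ hm' hl'_leg)
      rcases eq_or_ne f l' with rfl | h2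
      · exact iff_of_false (fun hm' => hcore _ hm' hl'_leg)
          (by rw [hefl']; exact fun hm' => hcore _ hm' hl_leg)
      rcases eq_or_ne f x₁ with rfl | h3
      · refine iff_of_false ?_ ?_
        · intro hm'
          have := G.marked_adj _ hm'; rw [hx₁w] at this; exact hwdv this
        · rw [hefx₁]
          intro hm'
          have := G.marked_adj _ hm'; rw [hx₁'w] at this; exact hw'dv this
      rcases eq_or_ne f x₂ with rfl | h4
      · refine iff_of_false ?_ ?_
        · intro hm'
          have := G.marked_adj _ hm'; rw [hx₂w] at this; exact hwdv this
        · rw [hefx₂]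
          intro hm'
          have := G.marked_adj _ hm'; rw [hx₂'w] at this; exact hw'dv this
      rcases eq_or_ne f x₁' with rfl | h5
      · refine iff_of_false ?_ ?_
        · intro hm'
          have := G.marked_adj _ hm'; rw [hx₁'w] at this; exact hw'dv this
        · rw [hefx₁']
          intro hm'
          have := G.marked_adj _ hm'; rw [hx₁w] at this; exact hwdv this
      rcases eq_or_ne f x₂' with rfl | h6
      · refine iff_of_false ?_ ?_
        · intro hm'
          have := G.marked_adj _ hm'; rw [hx₂'w] at this; exact hw'dv this
        · rw [hefx₂']
          intro hm'
          have := G.marked_adj _ hm'; rw [hx₂w] at this; exact hwdv this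
      rcases eq_or_ne f y₁ with rfl | h7
      · exact iff_of_true hy₁m (by rw [hefy₁]; exact hy₁'m)
      rcases eq_or_ne f y₂ with rfl | h8
      · exact iff_of_true hy₂m (by rw [hefy₂]; exact hy₂'m)
      rcases eq_or_ne f y₁' with rfl | h9
      · exact iff_of_true hy₁'m (by rw [hefy₁']; exact hy₁m)
      rcases eq_or_ne f y₂' with rfl | h10
      · exact iff_of_true hy₂'m (by rw [hefy₂']; exact hy₂m)
      · rw [hgen f h1 h2 h3 h4 h5 h6 h7 h8 h9 h10]
    · -- lab_eq
      intro i'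
      show eF ((lab ((Equiv.swap i j).symm i') : G.F)) = (lab i' : G.F)
      rw [Equiv.symm_swap]
      rcases eq_or_ne i' i with rfl | hi'
      · rw [Equiv.swap_apply_left, ← hl'def, hefl', hldef]
      rcases eq_or_ne i' j with rfl | hj'
      · rw [Equiv.swap_apply_right, ← hldef, hefl, hl'def]
      · rw [Equiv.swap_apply_of_ne_of_ne hi' hj']
        have hleg : G.ι (lab i' : G.F) = (lab i' : G.F) := (lab i').2
        refine hgen _ ?_ ?_ ?_ ?_ ?_ ?_ ?_ ?_ ?_ ?_
        · exact fun hc => hi' (lab.injective (Subtype.ext (by rw [hc, hldef])))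
        · exact fun hc => hj' (lab.injective (Subtype.ext (by rw [hc, hl'def])))
        · exact fun hc => hx₁nl (by rw [← hc, hleg])
        · exact fun hc => hx₂nl (by rw [← hc, hleg])
        · exact fun hc => hx₁'nl (by rw [← hc, hleg])
        · exact fun hc => hx₂'nl (by rw [← hc, hleg])
        · exact fun hc => hy₁nl (by rw [hx₁def, ← hc, hleg])
        · exact fun hc => hy₂nl (by rw [hx₂def, ← hc, hleg])
        · exact fun hc => hy₁'nl (by rw [hx₁'def, ← hc, hleg])
        · exact fun hc => hy₂'nl (by rw [hx₂'def, ← hc, hleg])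
  refine ⟨Equiv.swap w w', eF, hiso, ?_⟩
  -- the determinant character is trivial
  set Z₁ : G.NonLegs := ⟨x₁, hx₁nl⟩ with hZ₁
  set Z₂ : G.NonLegs := ⟨x₂, hx₂nl⟩ with hZ₂
  set Z₁' : G.NonLegs := ⟨x₁', hx₁'nl⟩ with hZ₁'
  set Z₂' : G.NonLegs := ⟨x₂', hx₂'nl⟩ with hZ₂'
  set E₁ : G.Edge := ⟦Z₁⟧ with hE₁
  set E₂ : G.Edge := ⟦Z₂⟧ with hE₂
  set E₁' : G.Edge := ⟦Z₁'⟧ with hE₁'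
  set E₂' : G.Edge := ⟦Z₂'⟧ with hE₂'
  -- inequalities between the four edges
  have hEne : ∀ (z z' : G.NonLegs), (z' : G.F) ≠ (z : G.F) →
      (z' : G.F) ≠ G.ι (z : G.F) → (⟦z⟧ : G.Edge) ≠ ⟦z'⟧ := by
    intro z z' h1 h2 hc
    rcases Quotient.exact hc with h | h
    · exact h1 h
    · exact h2 h
  have hE₁E₂ : E₁ ≠ E₂ := by
    refine hEne Z₁ Z₂ hx12.symm ?_
    show x₂ ≠ G.ι x₁
    rw [hιx₁]; exact hx₂y₁
  have hE₁E₂' : E₁ ≠ E₂' := by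
    refine hEne Z₁ Z₂' hx₁x₂'.symm ?_
    show x₂' ≠ G.ι x₁
    rw [hιx₁]; exact hx₂'y₁
  have hE₁'E₂ : E₁' ≠ E₂ := by
    refine hEne Z₁' Z₂ hx₂x₁' ?_
    show x₂ ≠ G.ι x₁'
    rw [hιx₁']; exact hx₂y₁'
  have hE₁'E₂' : E₁' ≠ E₂' := by
    refine hEne Z₁' Z₂' hx12'.symm ?_
    show x₂' ≠ G.ι x₁'
    rw [hιx₁']; exact hx₂'y₁'
  have hE₁E₁' : E₁ ≠ E₁' := by
    refine hEne Z₁ Z₁' hx₁x₁'.symm ?_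
    show x₁' ≠ G.ι x₁
    rw [hιx₁]; exact hx₁'y₁
  have hE₂E₂' : E₂ ≠ E₂' := by
    refine hEne Z₂ Z₂' hx₂x₂'.symm ?_
    show x₂' ≠ G.ι x₂
    rw [hιx₂]; exact hx₂'y₂
  -- identification of classes of the partner flags
  have hy₁E : (⟦⟨y₁, hy₁nl⟩⟧ : G.Edge) = E₁ := by
    rw [hE₁]
    refine (Quotient.sound ?_).symm
    exact Or.inr (by show y₁ = G.ι x₁; rw [hιx₁])
  have hy₂E : (⟦⟨y₂, hy₂nl⟩⟧ : G.Edge) = E₂ := by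
    rw [hE₂]
    refine (Quotient.sound ?_).symm
    exact Or.inr (by show y₂ = G.ι x₂; rw [hιx₂])
  have hy₁'E : (⟦⟨y₁', hy₁'nl⟩⟧ : G.Edge) = E₁' := by
    rw [hE₁']
    refine (Quotient.sound ?_).symm
    exact Or.inr (by show y₁' = G.ι x₁'; rw [hιx₁'])
  have hy₂'E : (⟦⟨y₂', hy₂'nl⟩⟧ : G.Edge) = E₂' := by
    rw [hE₂']
    refine (Quotient.sound ?_).symm
    exact Or.inr (by show y₂' = G.ι x₂'; rw [hιx₂'])
  -- the induced edge permutation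
  have hmk : ∀ (u : G.F) (hu : G.ι u ≠ u),
      edgePerm eF hiso.comm_ι ⟦(⟨u, hu⟩ : G.NonLegs)⟧ =
      ⟦(⟨eF u, (nonLegEquiv eF hiso.comm_ι ⟨u, hu⟩).2⟩ : G.NonLegs)⟧ :=
    fun u hu => rfl
  have hmk2 : ∀ (u v : G.F) (hu : G.ι u ≠ u) (hv : G.ι v ≠ v), eF u = v →
      edgePerm eF hiso.comm_ι ⟦(⟨u, hu⟩ : G.NonLegs)⟧ = ⟦(⟨v, hv⟩ : G.NonLegs)⟧ := by
    intro u v hu hv he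
    rw [hmk u hu]
    exact Quotient.sound (Or.inl he.symm)
  have hedge : edgePerm eF hiso.comm_ι = Equiv.swap E₁ E₁' * Equiv.swap E₂ E₂' := by
    refine Equiv.ext fun z => ?_
    induction z using Quotient.inductionOn with
    | h z =>
      obtain ⟨zf, hznl⟩ := z
      rcases eq_or_ne zf x₁ with rfl | g1
      · rw [hmk2 x₁ x₁' hznl hx₁'nl hefx₁, Equiv.Perm.mul_apply,
          show (⟦(⟨x₁, hznl⟩ : G.NonLegs)⟧ : G.Edge) = E₁ from rfl,
          Equiv.swap_apply_of_ne_of_ne hE₁E₂ hE₁E₂', Equiv.swap_apply_left]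
      rcases eq_or_ne y₁ zf with rfl | g2
      · rw [hmk2 y₁ y₁' hznl hy₁'nl hefy₁, hy₁'E, Equiv.Perm.mul_apply,
          show (⟦(⟨y₁, hznl⟩ : G.NonLegs)⟧ : G.Edge) = E₁ from hy₁E,
          Equiv.swap_apply_of_ne_of_ne hE₁E₂ hE₁E₂', Equiv.swap_apply_left]
      rcases eq_or_ne zf x₂ with rfl | g3
      · rw [hmk2 x₂ x₂' hznl hx₂'nl hefx₂, Equiv.Perm.mul_apply,
          show (⟦(⟨x₂, hznl⟩ : G.NonLegs)⟧ : G.Edge) = E₂ from rfl,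
          Equiv.swap_apply_left,
          Equiv.swap_apply_of_ne_of_ne hE₁E₂'.symm hE₁'E₂'.symm]
      rcases eq_or_ne y₂ zf with rfl | g4
      · rw [hmk2 y₂ y₂' hznl hy₂'nl hefy₂, hy₂'E, Equiv.Perm.mul_apply,
          show (⟦(⟨y₂, hznl⟩ : G.NonLegs)⟧ : G.Edge) = E₂ from hy₂E,
          Equiv.swap_apply_left,
          Equiv.swap_apply_of_ne_of_ne hE₁E₂'.symm hE₁'E₂'.symm]
      rcases eq_or_ne zf x₁' with rfl | g5
      · rw [hmk2 x₁' x₁ hznl hx₁nl hefx₁', Equiv.Perm.mul_apply,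
          show (⟦(⟨x₁', hznl⟩ : G.NonLegs)⟧ : G.Edge) = E₁' from rfl,
          Equiv.swap_apply_of_ne_of_ne hE₁'E₂ hE₁'E₂', Equiv.swap_apply_right]
      rcases eq_or_ne y₁' zf with rfl | g6
      · rw [hmk2 y₁' y₁ hznl hy₁nl hefy₁', hy₁E, Equiv.Perm.mul_apply,
          show (⟦(⟨y₁', hznl⟩ : G.NonLegs)⟧ : G.Edge) = E₁' from hy₁'E,
          Equiv.swap_apply_of_ne_of_ne hE₁'E₂ hE₁'E₂', Equiv.swap_apply_right]
      rcases eq_or_ne zf x₂' with rfl | g7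
      · rw [hmk2 x₂' x₂ hznl hx₂nl hefx₂', Equiv.Perm.mul_apply,
          show (⟦(⟨x₂', hznl⟩ : G.NonLegs)⟧ : G.Edge) = E₂' from rfl,
          Equiv.swap_apply_right,
          Equiv.swap_apply_of_ne_of_ne hE₁E₂.symm hE₁'E₂.symm]
      rcases eq_or_ne y₂' zf with rfl | g8
      · rw [hmk2 y₂' y₂ hznl hy₂nl hefy₂', hy₂E, Equiv.Perm.mul_apply,
          show (⟦(⟨y₂', hznl⟩ : G.NonLegs)⟧ : G.Edge) = E₂' from hy₂'E,
          Equiv.swap_apply_right,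
          Equiv.swap_apply_of_ne_of_ne hE₁E₂.symm hE₁'E₂.symm]
      · -- a non-leg flag not among the eight is fixed
        have hzl : zf ≠ l := fun hc => hznl (by rw [hc, hl_leg])
        have hzl' : zf ≠ l' := fun hc => hznl (by rw [hc, hl'_leg])
        have hzfix : eF zf = zf :=
          hgen zf hzl hzl' g1 g3 g5 g7 g2.symm g4.symm g6.symm g8.symm
        rw [hmk2 zf zf hznl hznl hzfix, Equiv.Perm.mul_apply]
        have hnot : ∀ (u : G.F) (hu : G.ι u ≠ u), zf ≠ u → zf ≠ G.ι u →
            (⟦(⟨zf, hznl⟩ : G.NonLegs)⟧ : G.Edge) ≠ ⟦⟨u, hu⟩⟧ := by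
          intro u hu h1 h2 hc
          rcases Quotient.exact hc with h | h
          · exact h1 h.symm
          · refine h2 ?_
            have h' : u = G.ι zf := h
            have : G.ι u = zf := by rw [h', G.ι_invol]
            exact this.symm
        have hzιx₁ : zf ≠ G.ι x₁ := by rw [hιx₁]; exact g2.symm
        have hzιx₂ : zf ≠ G.ι x₂ := by rw [hιx₂]; exact g4.symm
        have hzιx₁' : zf ≠ G.ι x₁' := by rw [hιx₁']; exact g6.symm
        have hzιx₂' : zf ≠ G.ι x₂' := by rw [hιx₂']; exact g8.symm
        rw [Equiv.swap_apply_of_ne_of_ne (hnot x₂ hx₂nl g3 hzιx₂)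
            (hnot x₂' hx₂'nl g7 hzιx₂'),
          Equiv.swap_apply_of_ne_of_ne (hnot x₁ hx₁nl g1 hzιx₁)
            (hnot x₁' hx₁'nl g5 hzιx₁')]
  -- the induced marked permutation
  set Y₁ : {f : G.F // f ∈ G.marked} := ⟨y₁, hy₁m⟩ with hY₁
  set Y₂ : {f : G.F // f ∈ G.marked} := ⟨y₂, hy₂m⟩ with hY₂
  set Y₁' : {f : G.F // f ∈ G.marked} := ⟨y₁', hy₁'m⟩ with hY₁'
  set Y₂' : {f : G.F // f ∈ G.marked} := ⟨y₂', hy₂'m⟩ with hY₂'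
  have hYne : ∀ (u v : G.F) (hu : u ∈ G.marked) (hv : v ∈ G.marked), u ≠ v →
      (⟨u, hu⟩ : {f : G.F // f ∈ G.marked}) ≠ ⟨v, hv⟩ :=
    fun u v hu hv h hc => h (congrArg Subtype.val hc)
  have hmmk : ∀ (u : G.F) (hu : u ∈ G.marked) (v : G.F) (hv : v ∈ G.marked),
      eF u = v → markedPerm eF hiso.mem_marked ⟨u, hu⟩ = ⟨v, hv⟩ :=
    fun u hu v hv he => Subtype.ext he
  have hY₁Y₂ : Y₁ ≠ Y₂ := hYne _ _ _ _ hy12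
  have hY₁Y₂' : Y₁ ≠ Y₂' := hYne _ _ _ _ hy₁y₂'
  have hY₁'Y₂ : Y₁' ≠ Y₂ := hYne _ _ _ _ hy₂y₁'.symm
  have hY₁'Y₂' : Y₁' ≠ Y₂' := hYne _ _ _ _ hy12'
  have hY₁Y₁' : Y₁ ≠ Y₁' := hYne _ _ _ _ hy₁y₁'
  have hY₂Y₂' : Y₂ ≠ Y₂' := hYne _ _ _ _ hy₂y₂'
  have hmarked : markedPerm eF hiso.mem_marked =
      Equiv.swap Y₁ Y₁' * Equiv.swap Y₂ Y₂' := by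
    refine Equiv.ext fun z => ?_
    obtain ⟨zf, hzm⟩ := z
    rcases eq_or_ne y₁ zf with rfl | g1
    · rw [hmmk y₁ hzm y₁' hy₁'m hefy₁, Equiv.Perm.mul_apply,
        show (⟨y₁, hzm⟩ : {f : G.F // f ∈ G.marked}) = Y₁ from rfl,
        Equiv.swap_apply_of_ne_of_ne hY₁Y₂ hY₁Y₂', Equiv.swap_apply_left]
    rcases eq_or_ne y₂ zf with rfl | g2
    · rw [hmmk y₂ hzm y₂' hy₂'m hefy₂, Equiv.Perm.mul_apply,
        show (⟨y₂, hzm⟩ : {f : G.F // f ∈ G.marked}) = Y₂ from rfl,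
        Equiv.swap_apply_left,
        Equiv.swap_apply_of_ne_of_ne hY₁Y₂'.symm hY₁'Y₂'.symm]
    rcases eq_or_ne y₁' zf with rfl | g3
    · rw [hmmk y₁' hzm y₁ hy₁m hefy₁', Equiv.Perm.mul_apply,
        show (⟨y₁', hzm⟩ : {f : G.F // f ∈ G.marked}) = Y₁' from rfl,
        Equiv.swap_apply_of_ne_of_ne hY₁'Y₂ hY₁'Y₂', Equiv.swap_apply_right]
    rcases eq_or_ne y₂' zf with rfl | g4
    · rw [hmmk y₂' hzm y₂ hy₂m hefy₂', Equiv.Perm.mul_apply,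
        show (⟨y₂', hzm⟩ : {f : G.F // f ∈ G.marked}) = Y₂' from rfl,
        Equiv.swap_apply_right,
        Equiv.swap_apply_of_ne_of_ne hY₁Y₂.symm hY₁'Y₂.symm]
    · have hzdv : G.a zf = G.dv := G.marked_adj zf hzm
      have hznleg : G.ι zf ≠ zf := hcore zf hzm
      have haw : G.a zf ≠ w := by rw [hzdv]; exact Ne.symm hwdv
      have haw' : G.a zf ≠ w' := by rw [hzdv]; exact Ne.symm hw'dv
      have hzfix : eF zf = zf := hfix zf haw haw' g1.symm g2.symm g3.symm g4.symm
      rw [hmmk zf hzm zf hzm hzfix, Equiv.Perm.mul_apply,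
        Equiv.swap_apply_of_ne_of_ne (hYne _ _ _ _ g2.symm) (hYne _ _ _ _ g4.symm),
        Equiv.swap_apply_of_ne_of_ne (hYne _ _ _ _ g1.symm) (hYne _ _ _ _ g3.symm)]
  -- putting it together
  show chi eF hiso.comm_ι hiso.mem_marked = 1
  rw [chi, hedge, hmarked, map_mul, map_mul,
    Equiv.Perm.sign_swap hE₁E₁', Equiv.Perm.sign_swap hE₂E₂',
    Equiv.Perm.sign_swap hY₁Y₁', Equiv.Perm.sign_swap hY₂Y₂']
  norm_num

end MGraph

namespace MGraph

/-- The combinatorial bound for an independent family of legs. -/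
lemma comb (G : MGraph) {n : ℕ} (lab : Fin n ≃ {f : G.F // G.ι f = f})
    (g r : ℕ) (hconn : G.Connected) (hadm : G.Admissible)
    (hcore : G.NoMarkedLegs) (htype : G.IsType g n r)
    (k : ℕ) (q : Fin k → Fin n) (hq : Function.Injective q)
    (hind : ∀ x y : Fin k, x ≠ y → ¬ PosPair G lab (q x) (q y)) :
    12 * (r : ℤ) + 4 * (k : ℤ) ≤ 18 * ((g : ℤ) - 1) + 8 * (n : ℤ) + 2 := by
  classical
  set ψ : Fin k → G.V := fun x => G.a (lab (q x) : G.F) with hψ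
  have hψinj : Function.Injective ψ := by
    intro x y hxy
    by_contra hne
    exact hind x y hne (posPair_same_vertex G lab hcore (q x) (q y)
      (fun hc => hne (hq hc)) hxy)
  set A : Finset G.V := Finset.image ψ Finset.univ with hA
  have hcardA : A.card = k := by
    rw [hA, Finset.card_image_of_injective _ hψinj, Finset.card_univ,
      Fintype.card_fin]
  have hA1 : ∀ w ∈ A, 1 ≤ (G.lgAt w).card := by
    intro w hw
    rcases Finset.mem_image.mp hw with ⟨x, _, rfl⟩
    refine Finset.card_pos.mpr ⟨(lab (q x) : G.F), ?_⟩
    exact Finset.mem_filter.mpr ⟨Finset.mem_univ _, (lab (q x)).2, rfl⟩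
  have hbad : ∀ w w', w ∈ A → w' ∈ A → w ≠ G.dv → w' ≠ G.dv →
      (G.nlAt w).card = 2 → (G.lgAt w).card = 1 → (G.Mk w).card = 2 →
      (G.nlAt w').card = 2 → (G.lgAt w').card = 1 → (G.Mk w').card = 2 →
      w = w' := by
    intro w w' hw hw' hwdv hw'dv he hL hM he' hL' hM'
    by_contra hne
    rcases Finset.mem_image.mp hw with ⟨x, _, rfl⟩
    rcases Finset.mem_image.mp hw' with ⟨x', _, hx'⟩
    subst hx'
    have hxx' : x ≠ x' := by
      intro hc; rw [hc] at hne; exact hne rfl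
    refine hind x x' hxx' ?_
    exact posPair_bad G lab hadm hcore (ψ x) (ψ x') hwdv hw'dv
      hne (q x) (q x') rfl rfl hL hL' he he' hM hM'
  have := G.counting g n r hconn hadm hcore htype A hA1 hbad
  rw [hcardA] at this
  exact this

end MGraph
/-- fix `g ≥ 1` and `ℓ` with `m := 3(g−1) + 2ℓ ≥ 0`.  For every core
graph `ξ` of type `(g, n, r)` with `n − r ≤ ℓ`, with leg labeling `lab`, subgroup
`H = I_γ` and canonical action `θ` on `det(γ)_{Aut(γ)}`, the `Sₙ`-module
`A_ξ = Ind_{I_γ}^{S_n}(det(γ)_{Aut(γ)})` satisfies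
`n + ρ(A_ξ) ≤ ⌈9(g−1)/2⌉ + 3(n−r) ≤ ⌈3m/2⌉`. -/
theorem core_graph_row_bound (g : ℕ) (hg : 1 ≤ g) (ℓ : ℤ)
    (hm : 0 ≤ 3 * ((g : ℤ) - 1) + 2 * ℓ)
    (G : MGraph) (n r : ℕ) (lab : Fin n ≃ {f : G.F // G.ι f = f})
    (hconn : G.Connected) (hadm : G.Admissible) (hcore : G.NoMarkedLegs)
    (htype : G.IsType g n r) (hnr : (n : ℤ) - (r : ℤ) ≤ ℓ)
    (H : Subgroup (Equiv.Perm (Fin n)))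
    (hH : (H : Set (Equiv.Perm (Fin n))) = G.ISet lab)
    (θ : Representation ℚ H (G.detCoinv lab))
    (hθ : G.CanonicalCoinvRep lab H θ) :
    (n : ℤ) + (rhoRep (indRep H θ) : ℤ) ≤
      ⌈(9 * ((g : ℚ) - 1)) / 2⌉ + 3 * ((n : ℤ) - (r : ℤ)) ∧
    ⌈(9 * ((g : ℚ) - 1)) / 2⌉ + 3 * ((n : ℤ) - (r : ℤ)) ≤
      ⌈(3 * (3 * ((g : ℚ) - 1) + 2 * (ℓ : ℚ))) / 2⌉ := by
  classical
  set c : ℤ := ⌈(9 * ((g : ℚ) - 1)) / 2⌉ with hcdef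
  have hceil : 9 * ((g : ℤ) - 1) ≤ 2 * c := by
    have h1 := Int.le_ceil ((9 * ((g : ℚ) - 1)) / 2)
    have h2 : (9 * ((g : ℚ) - 1)) ≤ 2 * ((c : ℤ) : ℚ) := by
      rw [hcdef]; push_cast at h1 ⊢; linarith
    exact_mod_cast h2
  constructor
  · -- part 1
    -- the zero-independent-set bound
    have hzero : 12 * (r : ℤ) ≤ 18 * ((g : ℤ) - 1) + 8 * (n : ℤ) + 2 := by
      have := G.comb lab g r hconn hadm hcore htype 0 (fun x => x.elim0)
        (fun x => x.elim0) (fun x => x.elim0)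
      simpa using this
    have hB0 : 0 ≤ c + 2 * (n : ℤ) - 3 * (r : ℤ) := by omega
    set B : ℤ := c + 2 * (n : ℤ) - 3 * (r : ℤ) with hB
    -- every element of the rho set is at most B
    have hS : ∀ k ∈ {k | ∃ h : k ≤ n, ∃ v : indCarrier H θ, v ≠ 0 ∧
        ∀ σ : Equiv.Perm (Fin k),
          indRep H θ (Equiv.Perm.viaEmbeddingHom (Fin.castLEEmb h) σ) v =
            ((Equiv.Perm.sign σ : ℤ) : ℚ) • v}, k ≤ B.toNat := by
      rintro k ⟨hk, v, hv, hsgn⟩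
      have hkB : (k : ℤ) ≤ B := by
        by_contra hgt
        push_neg at hgt
        -- pick a point where v does not vanish
        have hvne : (v : Equiv.Perm (Fin n) → G.detCoinv lab) ≠ 0 := by
          intro hc
          exact hv (Subtype.ext hc)
        rcases Function.ne_iff.mp hvne with ⟨p, hp⟩
        -- no positive pair can exist among the first k legs under p
        have hnopair : ∀ a b : Fin k, a ≠ b →
            ¬ PosPair G lab (p (Fin.castLE hk a)) (p (Fin.castLE hk b)) := by
          intro a b hab hpp
          exact hp (vanish_of_posPair G lab H hH θ hθ hk v hsgn p a b hab hpp)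
        -- hence the image family is independent and the counting bound applies
        have hqinj : Function.Injective (fun a : Fin k => p (Fin.castLE hk a)) :=
          fun a b hab => Fin.castLE_injective hk (p.injective hab)
        have := G.comb lab g r hconn hadm hcore htype k
          (fun a => p (Fin.castLE hk a)) hqinj hnopair
        omega
      have hBt : B = (B.toNat : ℤ) := (Int.toNat_of_nonneg hB0).symm
      exact_mod_cast hkB.trans (le_of_eq hBt)
    have hrho : rhoRep (indRep H θ) ≤ B.toNat := csSup_le' hS
    have : (rhoRep (indRep H θ) : ℤ) ≤ B := by
      have := (Int.toNat_of_nonneg hB0)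
      exact_mod_cast le_trans (Nat.cast_le.mpr hrho) (le_of_eq this)
    omega
  · -- part 2
    have heq : (3 * (3 * ((g : ℚ) - 1) + 2 * (ℓ : ℚ))) / 2 =
        (9 * ((g : ℚ) - 1)) / 2 + ((3 * ℓ : ℤ) : ℚ) := by
      push_cast
      ring
    rw [heq, Int.ceil_add_intCast, ← hcdef]
    omega
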